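/- Let B be a Banach space and f : Ω → B. The linear representation Φ : M^p → B defined by Φ(μ) = ∫_Ω f(x) dμ(x) is continuous with respect to OT_p if and only if f is continuous and x ↦ f(x)/d(x,∂Ω)^p is bounded on Ω. -/

import Mathlib

noncomputable section

open MeasureTheory Metric Set Filter Topology ENNReal
open scoped Classical

/-- The plane with the Euclidean distance. -/
abbrev Pt : Type := EuclideanSpace ℝ (Fin 2)

/-- Build a point of the plane from coordinates. -/
def mk2 (a b : ℝ) : Pt := (WithLp.equiv 2 (Fin 2 → ℝ)).symm ![a, b]

/-- The open upper half-plane Ω = {(t₁,t₂) : t₂ > t₁}. -/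
def UHP : Set Pt := {x | x 0 < x 1}

/-- The diagonal ∂Ω = {(t,t)}. -/
def Diag : Set Pt := {x | x 0 = x 1}

/-- Ω̄ = Ω ∪ ∂Ω. -/
def UHPbar : Set Pt := UHP ∪ Diag

/-- Distance from a point to the diagonal. -/
def persDist (x : Pt) : ℝ := infDist x Diag

/-- p-th total persistence Pers_p(μ) = ∫_Ω d(x,∂Ω)^p dμ(x). -/
def Pers (p : ℝ) (μ : Measure Pt) : ℝ≥0∞ :=
  ∫⁻ x in UHP, ENNReal.ofReal (persDist x ^ p) ∂μ

/-- μ ∈ M^p : a measure supported on Ω with finite p-th persistence. -/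
def MemMp (p : ℝ) (μ : Measure Pt) : Prop := μ UHPᶜ = 0 ∧ Pers p μ < ⊤

/-- Admissible partial transport plans between μ and ν: measures on Ω̄ × Ω̄ whose
marginals restricted to Ω are μ and ν. -/
def Adm (μ ν : Measure Pt) : Set (Measure (Pt × Pt)) :=
  {π | π ((UHPbar ×ˢ UHPbar)ᶜ) = 0 ∧
    (∀ A : Set Pt, MeasurableSet A → A ⊆ UHP → π (A ×ˢ univ) = μ A) ∧
    (∀ B : Set Pt, MeasurableSet B → B ⊆ UHP → π (univ ×ˢ B) = ν B)}

/-- Cost C_p(π) = ∬ d(x,y)^p dπ(x,y). -/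
def Cost (p : ℝ) (π : Measure (Pt × Pt)) : ℝ≥0∞ :=
  ∫⁻ z, ENNReal.ofReal (dist z.1 z.2 ^ p) ∂π

/-- OT_p(μ,ν)^p, as an extended real. -/
def OTe (p : ℝ) (μ ν : Measure Pt) : ℝ≥0∞ := ⨅ π ∈ Adm μ ν, Cost p π

/-- The optimal partial transport distance OT_p(μ,ν). -/
def OT (p : ℝ) (μ ν : Measure Pt) : ℝ := (OTe p μ ν ^ (1 / p)).toReal

/-- Optimal plans. -/
def OptSet (p : ℝ) (μ ν : Measure Pt) : Set (Measure (Pt × Pt)) :=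
  {π | π ∈ Adm μ ν ∧ Cost p π = OTe p μ ν}

/-- Vague convergence of measures on Ω: convergence of integrals of continuous
functions compactly supported in Ω. -/
def VagueTendsto (μs : ℕ → Measure Pt) (μ : Measure Pt) : Prop :=
  ∀ f : Pt → ℝ, Continuous f → HasCompactSupport f → tsupport f ⊆ UHP →
    Tendsto (fun n => ∫ x, f x ∂(μs n)) atTop (𝓝 (∫ x, f x ∂μ))

/-- E_Ω = (Ω̄ × Ω̄) \ (∂Ω × ∂Ω). -/
def EOm : Set (Pt × Pt) := (UHPbar ×ˢ UHPbar) \ (Diag ×ˢ Diag)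

/-- Vague convergence of plans on E_Ω. -/
def VaguePlanTendsto (πs : ℕ → Measure (Pt × Pt)) (π : Measure (Pt × Pt)) : Prop :=
  ∀ f : Pt × Pt → ℝ, Continuous f → HasCompactSupport f → tsupport f ⊆ EOm →
    Tendsto (fun n => ∫ z, f z ∂(πs n)) atTop (𝓝 (∫ z, f z ∂π))

/-- A persistence diagram: an ℕ-valued point measure Σ_{x ∈ X} n_x δ_x with
X ⊆ Ω locally finite in Ω. -/
def IsDiagram (μ : Measure Pt) : Prop :=
  ∃ (X : Set Pt) (n : Pt → ℕ), X ⊆ UHP ∧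
    (∀ x ∈ UHP, ∃ U ∈ 𝓝 x, (X ∩ U).Finite) ∧
    μ = Measure.sum (fun x : X => (n x.1 : ℝ≥0∞) • Measure.dirac (x.1 : Pt))

/-- Support of a measure on Pt × Pt. -/
def msupp (π : Measure (Pt × Pt)) : Set (Pt × Pt) := {z | ∀ U ∈ 𝓝 z, π U ≠ 0}

/-- Support of a measure on Pt. -/
def suppM (μ : Measure Pt) : Set Pt := {x | ∀ U ∈ 𝓝 x, μ U ≠ 0}

/-- Bottleneck cost of a plan: sup of d(x,y) over the support. -/
def CostInf (π : Measure (Pt × Pt)) : ℝ≥0∞ :=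
  ⨆ z ∈ msupp π, ENNReal.ofReal (dist z.1 z.2)

/-- The bottleneck (∞) optimal partial transport distance, as extended real. -/
def OTinfE (μ ν : Measure Pt) : ℝ≥0∞ := ⨅ π ∈ Adm μ ν, CostInf π

/-- μ ∈ M^∞ : support at bounded distance from the diagonal. -/
def MemMinf (μ : Measure Pt) : Prop :=
  μ UHPᶜ = 0 ∧ ∃ C : ℝ, ∀ x ∈ suppM μ, persDist x ≤ C

/-- A partial matching between two indexed families: a bijection between
subsets of the index sets; unmatched points are sent to the diagonal. -/
structure Matching (ι κ : Type*) where
  I : Set ι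
  J : Set κ
  e : I ≃ J

/-- Cost of a partial matching for d_p (as the p-th power, extended real). -/
def mCost (p : ℝ) {ι κ : Type*} (x : ι → Pt) (y : κ → Pt) (m : Matching ι κ) : ℝ≥0∞ :=
  (∑' i : m.I, ENNReal.ofReal (dist (x i.1) (y (m.e i).1) ^ p))
  + (∑' i : ↥(m.Iᶜ), ENNReal.ofReal (persDist (x i.1) ^ p))
  + (∑' j : ↥(m.Jᶜ), ENNReal.ofReal (persDist (y j.1) ^ p))

/-- Bottleneck cost of a partial matching. -/
def mCostInf {ι κ : Type*} (x : ι → Pt) (y : κ → Pt) (m : Matching ι κ) : ℝ≥0∞ :=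
  (⨆ i : m.I, ENNReal.ofReal (dist (x i.1) (y (m.e i).1)))
  ⊔ (⨆ i : ↥(m.Iᶜ), ENNReal.ofReal (persDist (x i.1)))
  ⊔ (⨆ j : ↥(m.Jᶜ), ENNReal.ofReal (persDist (y j.1)))

/-- The point measure associated to an indexed family of points. -/
def famMeasure {ι : Type*} (x : ι → Pt) : Measure Pt :=
  Measure.sum (fun i => Measure.dirac (x i))

/-- The weighted measure μ^p, with density d(x,∂Ω)^p with respect to μ. -/
def wgt (p : ℝ) (μ : Measure Pt) : Measure Pt :=
  μ.withDensity (fun x => ENNReal.ofReal (persDist x ^ p))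

/-- The quotient space Ω̃ = Ω ⊔ {∂Ω}. -/
def Qt : Type := Option ↥UHP

/-- The quotient metric ρ on Ω̃. -/
def ρQ : Qt → Qt → ℝ
  | some x, some y => min (dist (x : Pt) (y : Pt)) (persDist x + persDist y)
  | some x, none => persDist x
  | none, some y => persDist y
  | none, none => 0

/-- The quotient metric ρ viewed on the plane, all diagonal points being
identified. -/
def ρP (x y : Pt) : ℝ :=
  if x ∈ Diag then (if y ∈ Diag then 0 else persDist y)
  else if y ∈ Diag then persDist x
  else min (dist x y) (persDist x + persDist y)

/-- Couplings with full (equal-mass) marginals. -/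
def Coup (μ ν : Measure Pt) : Set (Measure (Pt × Pt)) :=
  {π | π.map Prod.fst = μ ∧ π.map Prod.snd = ν}

/-- The p-Wasserstein distance (to the p) for the quotient metric ρ. -/
def WpE (p : ℝ) (μ ν : Measure Pt) : ℝ≥0∞ :=
  ⨅ π ∈ Coup μ ν, ∫⁻ z, ENNReal.ofReal (ρP z.1 z.2 ^ p) ∂π


section Helpers

@[simp] lemma mk2_apply_zero (a b : ℝ) : mk2 a b 0 = a := rfl
@[simp] lemma mk2_apply_one (a b : ℝ) : mk2 a b 1 = b := rfl

lemma dist_pt_eq (x y : Pt) : dist x y = Real.sqrt ((x 0 - y 0)^2 + (x 1 - y 1)^2) := by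
  rw [EuclideanSpace.dist_eq]
  congr 1
  simp [Fin.sum_univ_two, Real.dist_eq, sq_abs]

lemma abs_coord_le_dist (x y : Pt) (i : Fin 2) : |x i - y i| ≤ dist x y := by
  rw [dist_pt_eq, ← Real.sqrt_sq_eq_abs]
  apply Real.sqrt_le_sqrt
  fin_cases i
  · exact le_add_of_nonneg_right (sq_nonneg _)
  · exact le_add_of_nonneg_left (sq_nonneg _)

lemma continuous_coord (i : Fin 2) : Continuous (fun x : Pt => x i) := by
  apply continuous_iff_continuousAt.2
  intro x
  apply Metric.continuousAt_iff.2
  intro ε hε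
  exact ⟨ε, hε, fun {y} hy => lt_of_le_of_lt (by simpa [Real.dist_eq] using abs_coord_le_dist y x i) hy⟩

lemma isOpen_UHP : IsOpen UHP := isOpen_lt (continuous_coord 0) (continuous_coord 1)
lemma isClosed_Diag : IsClosed Diag := isClosed_eq (continuous_coord 0) (continuous_coord 1)
lemma UHPbar_eq : UHPbar = {x : Pt | x 0 ≤ x 1} := by
  ext x; simp [UHPbar, UHP, Diag, le_iff_lt_or_eq, eq_comm]
lemma isClosed_UHPbar : IsClosed UHPbar := by
  rw [UHPbar_eq]; exact isClosed_le (continuous_coord 0) (continuous_coord 1)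
lemma zero_mem_Diag : (0 : Pt) ∈ Diag := by simp [Diag]
lemma Diag_nonempty : Diag.Nonempty := ⟨0, zero_mem_Diag⟩

lemma persDist_nonneg (x : Pt) : 0 ≤ persDist x := infDist_nonneg
lemma persDist_of_mem_Diag {x : Pt} (h : x ∈ Diag) : persDist x = 0 := infDist_zero_of_mem h
lemma persDist_le_dist {x y : Pt} (h : y ∈ Diag) : persDist x ≤ dist x y := infDist_le_dist_of_mem h
lemma persDist_le_add (x y : Pt) : persDist x ≤ persDist y + dist x y := infDist_le_infDist_add_dist
lemma continuous_persDist : Continuous persDist := continuous_infDist_pt _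
lemma persDist_le_norm (x : Pt) : persDist x ≤ ‖x‖ := by
  simpa using persDist_le_dist (x := x) zero_mem_Diag

lemma persDist_eq {x : Pt} (hx : x 0 ≤ x 1) : persDist x = (x 1 - x 0) / Real.sqrt 2 := by
  have h2 : (0:ℝ) < Real.sqrt 2 := Real.sqrt_pos.2 (by norm_num)
  apply le_antisymm
  · have hm : mk2 ((x 0 + x 1)/2) ((x 0 + x 1)/2) ∈ Diag := by simp [Diag]
    refine le_trans (persDist_le_dist hm) ?_
    rw [dist_pt_eq]
    simp only [mk2_apply_zero, mk2_apply_one]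
    rw [show ((x 0 - (x 0 + x 1)/2)^2 + (x 1 - (x 0+x 1)/2)^2 : ℝ) = ((x 1 - x 0)/Real.sqrt 2)^2 by
      field_simp
      nlinarith [Real.sq_sqrt (by norm_num : (2:ℝ) ≥ 0)]]
    rw [Real.sqrt_sq (div_nonneg (by linarith) h2.le)]
  · by_contra hlt
    push_neg at hlt
    obtain ⟨y, hy, hd⟩ := (infDist_lt_iff Diag_nonempty).1 hlt
    have h1 : (x 1 - x 0)/Real.sqrt 2 ≤ dist x y := by
      rw [dist_pt_eq]
      rw [Real.le_sqrt (div_nonneg (by linarith) h2.le) (by positivity)]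
      have hyd : y 0 = y 1 := hy
      have hs2 : Real.sqrt 2 ^ 2 = 2 := Real.sq_sqrt (by norm_num)
      rw [div_pow, hs2, ← hyd]
      nlinarith [sq_nonneg (x 0 + x 1 - 2 * y 0)]
    linarith
lemma persDist_pos {x : Pt} (hx : x ∈ UHP) : 0 < persDist x := by
  rw [persDist_eq (le_of_lt hx)]
  have : (0:ℝ) < Real.sqrt 2 := Real.sqrt_pos.2 (by norm_num)
  have hx' : x 0 < x 1 := hx
  exact div_pos (sub_pos.2 hx') this

-- chunk 2 appended to h1
section RpowFacts
variable {p : ℝ}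

lemma rpow_add_le (hp : 1 ≤ p) {a b : ℝ} (ha : 0 ≤ a) (hb : 0 ≤ b) :
    (a + b) ^ p ≤ 2 ^ p * (a ^ p + b ^ p) := by
  have hp0 : 0 ≤ p := by linarith
  have h1 : a + b ≤ 2 * max a b := by
    rcases le_total a b with h | h
    · simp [max_eq_right h]; linarith
    · simp [max_eq_left h]; linarith
  have hm : 0 ≤ max a b := le_max_of_le_left ha
  calc (a + b) ^ p ≤ (2 * max a b) ^ p :=
        Real.rpow_le_rpow (by linarith) h1 hp0
    _ = 2 ^ p * (max a b) ^ p := Real.mul_rpow (by norm_num) hm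
    _ ≤ 2 ^ p * (a ^ p + b ^ p) := by
        apply mul_le_mul_of_nonneg_left _ (Real.rpow_nonneg (by norm_num) p)
        rcases le_total a b with h | h
        · rw [max_eq_right h]
          exact le_add_of_nonneg_left (Real.rpow_nonneg ha p)
        · rw [max_eq_left h]
          exact le_add_of_nonneg_right (Real.rpow_nonneg hb p)

end RpowFacts

section MeasFacts
variable {p : ℝ}

lemma measurableSet_UHP : MeasurableSet UHP := isOpen_UHP.measurableSet
lemma measurableSet_UHPbar : MeasurableSet UHPbar := isClosed_UHPbar.measurableSet

lemma continuous_persPow (hp : 1 ≤ p) : Continuous (fun x : Pt => persDist x ^ p) :=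
  continuous_persDist.rpow_const (fun x => Or.inr (by linarith))

lemma meas_persPow (hp : 1 ≤ p) :
    Measurable (fun x : Pt => ENNReal.ofReal (persDist x ^ p)) :=
  ENNReal.measurable_ofReal.comp (continuous_persPow hp).measurable

lemma meas_distPow (hp : 1 ≤ p) :
    Measurable (fun z : Pt × Pt => ENNReal.ofReal (dist z.1 z.2 ^ p)) := by
  apply ENNReal.measurable_ofReal.comp
  exact ((continuous_fst.dist continuous_snd).rpow_const
    (fun x => Or.inr (by linarith))).measurable

/-- the weighted measure is finite for M^p measures, and computes tails -/
lemma pers_eq_total (hp : 1 ≤ p) {μ : Measure Pt} (hμ0 : μ UHPᶜ = 0) :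
    ∫⁻ x, ENNReal.ofReal (persDist x ^ p) ∂μ = Pers p μ := by
  rw [← lintegral_add_compl (fun x => ENNReal.ofReal (persDist x ^ p)) measurableSet_UHP]
  have : ∫⁻ x in UHPᶜ, ENNReal.ofReal (persDist x ^ p) ∂μ = 0 := by
    rw [setLIntegral_measure_zero _ _ hμ0]
  rw [Pers] at *
  rw [this, add_zero]

/-- generic marginal lemma -/
lemma marg_restrict {π : Measure (Pt × Pt)} {μ : Measure Pt} {g : Pt × Pt → Pt}
    (hg : Measurable g) (hmarg : ∀ B : Set Pt, MeasurableSet B → B ⊆ UHP → π (g ⁻¹' B) = μ B)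
    (hμ0 : μ UHPᶜ = 0) : (π.map g).restrict UHP = μ := by
  ext A hA
  rw [Measure.restrict_apply hA, Measure.map_apply hg (hA.inter measurableSet_UHP),
    hmarg _ (hA.inter measurableSet_UHP) inter_subset_right]
  have h0 : μ (A \ UHP) = 0 :=
    measure_mono_null (fun x hx => hx.2) hμ0
  rw [← measure_inter_add_diff A measurableSet_UHP, h0, add_zero]

lemma lint_marg (hp : 1 ≤ p) {π : Measure (Pt × Pt)} {μ : Measure Pt} {g : Pt × Pt → Pt}
    (hg : Measurable g) (hnull : π (g ⁻¹' UHPbarᶜ) = 0)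
    (hrestrict : (π.map g).restrict UHP = μ)
    (S : Set Pt) (hS : MeasurableSet S) :
    ∫⁻ z, (Sᶜ.indicator (fun y => ENNReal.ofReal (persDist y ^ p)) (g z)) ∂π
      = ∫⁻ x in Sᶜ, ENNReal.ofReal (persDist x ^ p) ∂μ := by
  have hp0 : p ≠ 0 := by linarith
  set h : Pt → ℝ≥0∞ := Sᶜ.indicator (fun y => ENNReal.ofReal (persDist y ^ p)) with hh
  have hhm : Measurable h := (meas_persPow hp).indicator hS.compl
  have hmap : ∫⁻ z, h (g z) ∂π = ∫⁻ y, h y ∂(π.map g) := (lintegral_map hhm hg).symm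
  rw [hmap, ← lintegral_add_compl h measurableSet_UHP]
  have h2 : ∫⁻ y in UHPᶜ, h y ∂(π.map g) = 0 := by
    have hnull' : (π.map g) UHPbarᶜ = 0 := by
      rw [Measure.map_apply hg measurableSet_UHPbar.compl]; exact hnull
    have hz : ∀ᵐ y ∂(π.map g), y ∈ UHPᶜ → h y = 0 := by
      rw [ae_iff]
      refine measure_mono_null (fun y hy => ?_) hnull'
      simp only [mem_setOf_eq, Classical.not_imp] at hy
      intro hyb
      rcases hyb with h' | h'
      · exact hy.1 h'
      · apply hy.2
        rw [hh]
        by_cases hyS : y ∈ Sᶜ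
        · simp only [indicator_of_mem hyS, persDist_of_mem_Diag h', Real.zero_rpow hp0,
            ENNReal.ofReal_zero]
        · simp [indicator_of_notMem hyS]
    have : ∫⁻ y in UHPᶜ, h y ∂(π.map g) = ∫⁻ y in UHPᶜ, (0:ℝ≥0∞) ∂(π.map g) := by
      apply lintegral_congr_ae
      filter_upwards [ae_restrict_mem measurableSet_UHP.compl, ae_restrict_of_ae hz] with y h1 h2
      exact h2 h1
    simpa using this
  rw [h2, add_zero, ← hrestrict]
  simp only [hh]
  rw [lintegral_indicator hS.compl]

end MeasFacts

section BochnerGen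
variable {p : ℝ} {B : Type*} [NormedAddCommGroup B] [NormedSpace ℝ B] [CompleteSpace B]

lemma ft_norm_le (hp : 1 ≤ p) {f : Pt → B} {C : ℝ} (hC : 0 ≤ C)
    (hfb : ∀ x ∈ UHP, ‖f x‖ ≤ C * persDist x ^ p) (x : Pt) :
    ‖UHP.indicator f x‖ ≤ C * persDist x ^ p := by
  by_cases hx : x ∈ UHP
  · rw [indicator_of_mem hx]; exact hfb x hx
  · rw [indicator_of_notMem hx, norm_zero]
    exact mul_nonneg hC (Real.rpow_nonneg (persDist_nonneg x) p)

lemma gen_int (hp : 1 ≤ p) {f : Pt → B} (hfc : ContinuousOn f UHP) {C : ℝ} (hC : 0 ≤ C)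
    (hfb : ∀ x ∈ UHP, ‖f x‖ ≤ C * persDist x ^ p)
    {π : Measure (Pt × Pt)} {μ : Measure Pt} {g : Pt × Pt → Pt} (hg : Measurable g)
    (hnull : π (g ⁻¹' UHPbarᶜ) = 0) (hrestrict : (π.map g).restrict UHP = μ)
    (hμ : MemMp p μ) :
    Integrable (fun z => UHP.indicator f (g z)) π ∧
      Integrable f μ ∧
      ∫ z, UHP.indicator f (g z) ∂π = ∫ x, f x ∂μ := by
  set m := π.map g with hm
  set ft : Pt → B := UHP.indicator f with hft
  have hdec : m.restrict UHP + m.restrict UHPᶜ = m :=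
    Measure.restrict_add_restrict_compl measurableSet_UHP
  have hae0 : ft =ᵐ[m.restrict UHPᶜ] (fun _ => (0 : B)) := by
    filter_upwards [ae_restrict_mem measurableSet_UHP.compl] with x hx
    exact indicator_of_notMem hx f
  have hA1 : AEStronglyMeasurable ft (m.restrict UHP) := by
    have : ContinuousOn ft UHP := hfc.congr (fun x hx => indicator_of_mem hx f)
    exact this.aestronglyMeasurable measurableSet_UHP
  have hA2 : AEStronglyMeasurable ft (m.restrict UHPᶜ) :=
    (aestronglyMeasurable_const (b := (0 : B))).congr hae0.symm
  have hAESM : AEStronglyMeasurable ft m := by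
    rw [← hdec]; exact hA1.add_measure hA2
  have hlift : ∫⁻ y, ENNReal.ofReal (persDist y ^ p) ∂m = Pers p μ := by
    have h1 : ∫⁻ y, ENNReal.ofReal (persDist y ^ p) ∂m
        = ∫⁻ z, ENNReal.ofReal (persDist (g z) ^ p) ∂π := lintegral_map (meas_persPow hp) hg
    have h2 := lint_marg hp hg hnull hrestrict ∅ MeasurableSet.empty
    simp only [compl_empty, indicator_univ, Measure.restrict_univ] at h2
    rw [h1, h2, pers_eq_total hp hμ.1]
  have hfin : ∫⁻ y, ‖ft y‖₊ ∂m < ⊤ := by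
    have hb : ∀ y, (‖ft y‖₊ : ℝ≥0∞) ≤ ENNReal.ofReal (C * persDist y ^ p) := by
      intro y
      rw [← enorm_eq_nnnorm, ← ofReal_norm]
      exact ENNReal.ofReal_le_ofReal (ft_norm_le hp hC hfb y)
    calc ∫⁻ y, ‖ft y‖₊ ∂m ≤ ∫⁻ y, ENNReal.ofReal (C * persDist y ^ p) ∂m := lintegral_mono hb
      _ = ENNReal.ofReal C * ∫⁻ y, ENNReal.ofReal (persDist y ^ p) ∂m := by
          simp_rw [ENNReal.ofReal_mul hC]
          exact lintegral_const_mul _ (meas_persPow hp)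
      _ = ENNReal.ofReal C * Pers p μ := by rw [hlift]
      _ < ⊤ := ENNReal.mul_lt_top ENNReal.ofReal_lt_top hμ.2
  have hIm : Integrable ft m := ⟨hAESM, hfin⟩
  have hIπ : Integrable (fun z => ft (g z)) π := by
    have := (integrable_map_measure hAESM hg.aemeasurable).1 hIm
    exact this
  have hμft : f =ᵐ[μ] ft := by
    rw [Filter.eventuallyEq_iff_exists_mem]
    refine ⟨UHP, ?_, fun x hx => (indicator_of_mem hx f).symm⟩
    rw [mem_ae_iff]
    exact hμ.1
  have hIμ : Integrable f μ := by
    have : Integrable ft μ := by rw [← hrestrict]; exact hIm.restrict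
    exact this.congr hμft.symm
  refine ⟨hIπ, hIμ, ?_⟩
  have e1 : ∫ z, ft (g z) ∂π = ∫ y, ft y ∂m := (integral_map hg.aemeasurable hAESM).symm
  have e2 : ∫ y, ft y ∂m = ∫ y, ft y ∂(m.restrict UHP) + ∫ y, ft y ∂(m.restrict UHPᶜ) := by
    conv_lhs => rw [← hdec]
    exact integral_add_measure hIm.restrict hIm.restrict
  have e3 : ∫ y, ft y ∂(m.restrict UHPᶜ) = 0 := integral_eq_zero_of_ae hae0
  have e4 : ∫ y, ft y ∂(m.restrict UHP) = ∫ x, f x ∂μ := by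
    rw [hrestrict]; exact (integral_congr_ae hμft).symm
  rw [e1, e2, e3, e4, add_zero]

lemma Adm_null {π : Measure (Pt × Pt)} {μn μ : Measure Pt} (hπ : π ∈ Adm μn μ) :
    π ((UHPbar ×ˢ UHPbar)ᶜ) = 0 := hπ.1

lemma Adm_fst_null {π : Measure (Pt × Pt)} {μn μ : Measure Pt} (hπ : π ∈ Adm μn μ) :
    π (Prod.fst ⁻¹' UHPbarᶜ) = 0 := by
  refine measure_mono_null (fun z hz => ?_) hπ.1
  intro hmem
  exact hz hmem.1

lemma Adm_snd_null {π : Measure (Pt × Pt)} {μn μ : Measure Pt} (hπ : π ∈ Adm μn μ) :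
    π (Prod.snd ⁻¹' UHPbarᶜ) = 0 := by
  refine measure_mono_null (fun z hz => ?_) hπ.1
  intro hmem
  exact hz hmem.2

lemma Adm_fst_restrict {π : Measure (Pt × Pt)} {μn μ : Measure Pt} (hπ : π ∈ Adm μn μ)
    (hμn0 : μn UHPᶜ = 0) : (π.map Prod.fst).restrict UHP = μn := by
  apply marg_restrict measurable_fst _ hμn0
  intro A hA hAU
  rw [← Set.prod_univ]
  exact hπ.2.1 A hA hAU

lemma Adm_snd_restrict {π : Measure (Pt × Pt)} {μn μ : Measure Pt} (hπ : π ∈ Adm μn μ)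
    (hμ0 : μ UHPᶜ = 0) : (π.map Prod.snd).restrict UHP = μ := by
  apply marg_restrict measurable_snd _ hμ0
  intro A hA hAU
  rw [← Set.univ_prod]
  exact hπ.2.2 A hA hAU

end BochnerGen

section KsetFacts

def Kset (δ R : ℝ) : Set Pt := (UHPbar ∩ {x | δ ≤ persDist x}) ∩ closedBall 0 R

lemma Kset_closed (δ R : ℝ) : IsClosed (Kset δ R) :=
  ((isClosed_UHPbar.inter (isClosed_le continuous_const continuous_persDist)).inter
    isClosed_closedBall)

lemma Kset_compact (δ R : ℝ) : IsCompact (Kset δ R) :=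
  ((isCompact_closedBall 0 R).inter_left
    (isClosed_UHPbar.inter (isClosed_le continuous_const continuous_persDist)))

lemma Kset_subset_UHP {δ R : ℝ} (hδ : 0 < δ) : Kset δ R ⊆ UHP := by
  rintro y ⟨⟨hy1, hy2⟩, _⟩
  rcases hy1 with h | h
  · exact h
  · exfalso
    have h2 : δ ≤ persDist y := hy2
    rw [persDist_of_mem_Diag h] at h2; linarith

lemma sqrt_two_gt : (1.414 : ℝ) ≤ Real.sqrt 2 := by
  rw [show (1.414:ℝ) = Real.sqrt (1.414^2) by rw [Real.sqrt_sq (by norm_num)]]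
  exact Real.sqrt_le_sqrt (by norm_num)

lemma cthickening_subset_UHP {δ R : ℝ} (hδ : 0 < δ) :
    cthickening (δ/2) (Kset δ R) ⊆ UHP := by
  intro z hz
  have hz' : z ∈ thickening (3*δ/5) (Kset δ R) :=
    cthickening_subset_thickening' (by linarith) (by linarith) _ hz
  obtain ⟨y, hyK, hdzy⟩ := mem_thickening_iff.1 hz'
  have hy01 : y 0 ≤ y 1 := by
    have := hyK.1.1
    rw [UHPbar_eq] at this; exact this
  have hyδ : δ ≤ (y 1 - y 0) / Real.sqrt 2 := by
    rw [← persDist_eq hy01]; exact hyK.1.2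
  have h2 : (0:ℝ) < Real.sqrt 2 := Real.sqrt_pos.2 (by norm_num)
  have hy10 : Real.sqrt 2 * δ ≤ y 1 - y 0 := by
    rw [le_div_iff₀ h2] at hyδ; linarith [hyδ]
  have hc0 : |z 0 - y 0| ≤ dist z y := abs_coord_le_dist z y 0
  have hc1 : |z 1 - y 1| ≤ dist z y := abs_coord_le_dist z y 1
  have hs : (1.414 : ℝ) ≤ Real.sqrt 2 := sqrt_two_gt
  show z 0 < z 1
  have h0 := abs_le.1 hc0
  have h1 := abs_le.1 hc1
  nlinarith [hy10, hdzy]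

lemma Kset_measure_finite {p δ R : ℝ} (hp : 1 ≤ p) (hδ : 0 < δ) {μ : Measure Pt}
    (hμ : MemMp p μ) : μ (Kset δ R) ≠ ⊤ := by
  intro htop
  have h1 : ENNReal.ofReal (δ ^ p) * μ (Kset δ R) ≤ Pers p μ := by
    calc ENNReal.ofReal (δ ^ p) * μ (Kset δ R)
        = ∫⁻ _ in Kset δ R, ENNReal.ofReal (δ ^ p) ∂μ := by
          rw [setLIntegral_const]
      _ ≤ ∫⁻ x in Kset δ R, ENNReal.ofReal (persDist x ^ p) ∂μ := by
          apply setLIntegral_mono (meas_persPow hp)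
          intro x hx
          exact ENNReal.ofReal_le_ofReal
            (Real.rpow_le_rpow (le_of_lt hδ) hx.1.2 (by linarith))
      _ ≤ ∫⁻ x in UHP, ENNReal.ofReal (persDist x ^ p) ∂μ := by
          apply lintegral_mono_set (Kset_subset_UHP hδ)
      _ = Pers p μ := rfl
  rw [htop, ENNReal.mul_top (by
    simp only [ne_eq, ENNReal.ofReal_eq_zero, not_le]
    positivity)] at h1
  exact absurd (lt_of_le_of_lt h1 hμ.2) (lt_irrefl ⊤)

end KsetFacts

section Pointwise
variable {p : ℝ} {B : Type*} [NormedAddCommGroup B] [NormedSpace ℝ B] [CompleteSpace B]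

lemma pointwise_bound (hp : 1 ≤ p) {f : Pt → B} {C : ℝ} (hC : 0 ≤ C)
    (hfb : ∀ x ∈ UHP, ‖f x‖ ≤ C * persDist x ^ p)
    {δ R r ε' : ℝ} (hδ : 0 < δ) (hR : 0 < R) (hr : 0 < r) (hrδ : r ≤ δ/2) (hε' : 0 ≤ ε')
    (hUC : ∀ a ∈ cthickening (δ/2) (Kset δ R), ∀ b ∈ cthickening (δ/2) (Kset δ R),
      dist a b < r → ‖f a - f b‖ ≤ ε')
    {x y : Pt} (hx : x ∈ UHPbar) (hy : y ∈ UHPbar) :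
    ‖UHP.indicator f x - UHP.indicator f y‖ ≤
      (if y ∈ Kset δ R then ε' else 0)
      + (C * (2 ^ p + 2 * (R/r + 1) ^ p)) * dist x y ^ p
      + (C * (2 ^ p + 1)) * (if y ∈ Kset δ R then 0 else persDist y ^ p) := by
  have hp0 : 0 ≤ p := by linarith
  set a := persDist x with hadef
  set b := persDist y with hbdef
  set t := dist x y with htdef
  have ha : 0 ≤ a := persDist_nonneg x
  have hb : 0 ≤ b := persDist_nonneg y
  have ht : 0 ≤ t := dist_nonneg
  have htp : 0 ≤ t ^ p := Real.rpow_nonneg ht p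
  have hbp : 0 ≤ b ^ p := Real.rpow_nonneg hb p
  have hax : ‖UHP.indicator f x‖ ≤ C * a ^ p := ft_norm_le hp hC hfb x
  have hay : ‖UHP.indicator f y‖ ≤ C * b ^ p := ft_norm_le hp hC hfb y
  have hab : a ≤ b + t := persDist_le_add x y
  have h2p : (0:ℝ) ≤ 2 ^ p := Real.rpow_nonneg (by norm_num) p
  have hRr1 : (0:ℝ) ≤ R/r + 1 := by
    have := div_nonneg hR.le hr.le; linarith
  have htri : ‖UHP.indicator f x - UHP.indicator f y‖
      ≤ C * a ^ p + C * b ^ p := le_trans (norm_sub_le _ _) (add_le_add hax hay)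
  by_cases hyK : y ∈ Kset δ R
  · simp only [hyK, if_true, mul_zero, add_zero]
    by_cases htr : t < r
    · -- both in thickened compact: uniform continuity
      have hyK' : y ∈ cthickening (δ/2) (Kset δ R) := self_subset_cthickening _ hyK
      have hxK' : x ∈ cthickening (δ/2) (Kset δ R) :=
        mem_cthickening_of_dist_le x y (δ/2) _ hyK (le_trans (le_of_lt htr) hrδ)
      have hxU : x ∈ UHP := cthickening_subset_UHP hδ hxK'
      have hyU : y ∈ UHP := cthickening_subset_UHP hδ hyK'
      rw [indicator_of_mem hxU, indicator_of_mem hyU]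
      have := hUC x hxK' y hyK' htr
      have hκ : 0 ≤ (C * (2 ^ p + 2 * (R/r + 1) ^ p)) * t ^ p := by
        apply mul_nonneg (mul_nonneg hC _) htp
        have : (0:ℝ) ≤ (R/r+1)^p := Real.rpow_nonneg hRr1 p
        linarith
      linarith
    · -- far case with y in compact: use b ≤ R
      push_neg at htr
      have hbR : b ≤ R := by
        have h1 : y ∈ closedBall (0:Pt) R := hyK.2
        have h2 : ‖y‖ ≤ R := by simpa using h1
        exact le_trans (persDist_le_norm y) h2
      have hRr0 : (0:ℝ) ≤ R / r := by
        apply div_nonneg _ (le_of_lt hr)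
        exact le_trans hb hbR
      have hbt : b ≤ (R/r) * t := by
        calc b ≤ R := hbR
          _ = (R/r) * r := by field_simp
          _ ≤ (R/r) * t := mul_le_mul_of_nonneg_left htr hRr0
      have hat : a ≤ (R/r + 1) * t := by
        calc a ≤ b + t := hab
          _ ≤ (R/r) * t + t := by linarith
          _ = (R/r + 1) * t := by ring
      have hap2 : a ^ p ≤ (R/r+1) ^ p * t ^ p := by
        rw [← Real.mul_rpow hRr1 ht]
        exact Real.rpow_le_rpow ha hat hp0
      have hbp2 : b ^ p ≤ (R/r+1) ^ p * t ^ p := by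
        rw [← Real.mul_rpow hRr1 ht]
        apply Real.rpow_le_rpow hb _ hp0
        calc b ≤ (R/r) * t := hbt
          _ ≤ (R/r+1) * t := mul_le_mul_of_nonneg_right (by linarith) ht
      have hC2p : 0 ≤ C * 2^p * t^p := by positivity
      calc ‖UHP.indicator f x - UHP.indicator f y‖ ≤ C * a ^ p + C * b ^ p := htri
        _ ≤ C * ((R/r+1)^p * t^p) + C * ((R/r+1)^p * t^p) := by
            apply add_le_add (mul_le_mul_of_nonneg_left hap2 hC)
              (mul_le_mul_of_nonneg_left hbp2 hC)
        _ ≤ (C * (2 ^ p + 2 * (R/r + 1) ^ p)) * t ^ p := by nlinarith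
        _ ≤ ε' + (C * (2 ^ p + 2 * (R/r + 1) ^ p)) * t ^ p := by linarith
  · simp only [hyK, if_false]
    have hap : a ^ p ≤ 2 ^ p * (b ^ p + t ^ p) := by
      calc a ^ p ≤ (b + t) ^ p := Real.rpow_le_rpow ha hab hp0
        _ ≤ 2 ^ p * (b ^ p + t ^ p) := rpow_add_le hp hb ht
    have hk1 : 0 ≤ 2 * (R/r+1)^p := by
      have := Real.rpow_nonneg hRr1 p; linarith
    calc ‖UHP.indicator f x - UHP.indicator f y‖ ≤ C * a ^ p + C * b ^ p := htri
      _ ≤ C * (2 ^ p * (b ^ p + t ^ p)) + C * b ^ p := by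
          apply add_le_add_left (mul_le_mul_of_nonneg_left hap hC)
      _ = (C * 2^p) * t^p + (C * (2^p + 1)) * b^p := by ring
      _ ≤ (C * (2 ^ p + 2 * (R/r + 1) ^ p)) * t ^ p + (C * (2 ^ p + 1)) * b ^ p := by
          apply add_le_add_left
          apply mul_le_mul_of_nonneg_right _ htp
          nlinarith
      _ ≤ 0 + (C * (2 ^ p + 2 * (R/r + 1) ^ p)) * t ^ p + (C * (2 ^ p + 1)) * b ^ p := by
          linarith

end Pointwise

section PlanEstimate
variable {p : ℝ} {B : Type*} [NormedAddCommGroup B] [NormedSpace ℝ B] [CompleteSpace B]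

lemma plan_estimate (hp : 1 ≤ p) {f : Pt → B} (hfc : ContinuousOn f UHP) {C : ℝ} (hC : 0 ≤ C)
    (hfb : ∀ x ∈ UHP, ‖f x‖ ≤ C * persDist x ^ p)
    {μn μ : Measure Pt} (hμn : MemMp p μn) (hμ : MemMp p μ)
    {π : Measure (Pt × Pt)} (hπ : π ∈ Adm μn μ) (hCost : Cost p π ≠ ⊤)
    {δ R r ε' : ℝ} (hδ : 0 < δ) (hR : 0 < R) (hr : 0 < r) (hrδ : r ≤ δ/2) (hε' : 0 ≤ ε')
    (hUC : ∀ a ∈ cthickening (δ/2) (Kset δ R), ∀ b ∈ cthickening (δ/2) (Kset δ R),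
      dist a b < r → ‖f a - f b‖ ≤ ε') :
    ‖(∫ x, f x ∂μn) - ∫ x, f x ∂μ‖ ≤
      (ENNReal.ofReal ε' * μ (Kset δ R)
        + ENNReal.ofReal (C * (2 ^ p + 2 * (R/r + 1) ^ p)) * Cost p π
        + ENNReal.ofReal (C * (2 ^ p + 1))
            * ∫⁻ x in (Kset δ R)ᶜ, ENNReal.ofReal (persDist x ^ p) ∂μ).toReal := by
  set K := Kset δ R with hKdef
  have hKmeas : MeasurableSet K := (Kset_closed δ R).measurableSet
  have hKU : K ⊆ UHP := Kset_subset_UHP hδ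
  set κ₁ := C * (2 ^ p + 2 * (R/r + 1) ^ p) with hκ₁
  set κ₂ := C * (2 ^ p + 1) with hκ₂
  have hκ₁0 : 0 ≤ κ₁ := by
    have h1 : (0:ℝ) ≤ 2^p := Real.rpow_nonneg (by norm_num) p
    have h2 : (0:ℝ) ≤ (R/r+1)^p := Real.rpow_nonneg (by positivity) p
    apply mul_nonneg hC; linarith
  have hκ₂0 : 0 ≤ κ₂ := by
    have h1 : (0:ℝ) ≤ 2^p := Real.rpow_nonneg (by norm_num) p
    apply mul_nonneg hC; linarith
  -- integral representations
  obtain ⟨hIfst, _, hEfst⟩ := gen_int hp hfc hC hfb measurable_fst (Adm_fst_null hπ)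
    (Adm_fst_restrict hπ hμn.1) hμn
  obtain ⟨hIsnd, _, hEsnd⟩ := gen_int hp hfc hC hfb measurable_snd (Adm_snd_null hπ)
    (Adm_snd_restrict hπ hμ.1) hμ
  have hdiff : (∫ x, f x ∂μn) - ∫ x, f x ∂μ
      = ∫ z, (UHP.indicator f z.1 - UHP.indicator f z.2) ∂π := by
    rw [← hEfst, ← hEsnd, integral_sub hIfst hIsnd]
  rw [hdiff]
  refine le_trans (norm_integral_le_lintegral_norm _) ?_
  apply ENNReal.toReal_mono
  · -- finiteness of the bound
    apply ENNReal.add_ne_top.2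
    constructor
    · apply ENNReal.add_ne_top.2
      constructor
      · exact ENNReal.mul_ne_top ENNReal.ofReal_ne_top (Kset_measure_finite hp hδ hμ)
      · exact ENNReal.mul_ne_top ENNReal.ofReal_ne_top hCost
    · apply ENNReal.mul_ne_top ENNReal.ofReal_ne_top
      have h1 : ∫⁻ x in Kᶜ, ENNReal.ofReal (persDist x ^ p) ∂μ
          ≤ ∫⁻ x, ENNReal.ofReal (persDist x ^ p) ∂μ := setLIntegral_le_lintegral _ _
      rw [pers_eq_total hp hμ.1] at h1
      exact ne_top_of_le_ne_top hμ.2.ne h1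
  -- main bound on the lintegral
  have haeprod : ∀ᵐ z ∂π, z ∈ UHPbar ×ˢ UHPbar := by
    rw [ae_iff]
    exact hπ.1
  have hbound : ∫⁻ z, ENNReal.ofReal ‖UHP.indicator f z.1 - UHP.indicator f z.2‖ ∂π
      ≤ ∫⁻ z, ((Prod.snd ⁻¹' K).indicator (fun _ => ENNReal.ofReal ε') z
          + ENNReal.ofReal κ₁ * ENNReal.ofReal (dist z.1 z.2 ^ p)
          + ENNReal.ofReal κ₂
            * (Kᶜ.indicator (fun y => ENNReal.ofReal (persDist y ^ p)) z.2)) ∂π := by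
    apply lintegral_mono_ae
    filter_upwards [haeprod] with z hz
    have hx := hz.1
    have hy := hz.2
    have hpt := pointwise_bound hp hC hfb hδ hR hr hrδ hε' hUC hx hy
    by_cases hyK : z.2 ∈ K
    · simp only [show z.2 ∈ Kset δ R from hyK, if_true, mul_zero, add_zero] at hpt
      have e1 : (Prod.snd ⁻¹' K).indicator (fun _ => ENNReal.ofReal ε') z
          = ENNReal.ofReal ε' := indicator_of_mem (show z ∈ Prod.snd ⁻¹' K from hyK) _
      have e3 : Kᶜ.indicator (fun y => ENNReal.ofReal (persDist y ^ p)) z.2 = 0 :=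
        indicator_of_notMem (by simpa using hyK) _
      rw [e1, e3, mul_zero, add_zero, ← ENNReal.ofReal_mul hκ₁0, ← ENNReal.ofReal_add hε'
        (mul_nonneg hκ₁0 (Real.rpow_nonneg dist_nonneg p))]
      exact ENNReal.ofReal_le_ofReal hpt
    · simp only [show z.2 ∉ Kset δ R from hyK, if_false] at hpt
      have e1 : (Prod.snd ⁻¹' K).indicator (fun _ => ENNReal.ofReal ε') z = 0 :=
        indicator_of_notMem (show z ∉ Prod.snd ⁻¹' K from hyK) _
      have e3 : Kᶜ.indicator (fun y => ENNReal.ofReal (persDist y ^ p)) z.2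
          = ENNReal.ofReal (persDist z.2 ^ p) := indicator_of_mem (by simpa using hyK) _
      rw [e1, e3, zero_add, ← ENNReal.ofReal_mul hκ₁0, ← ENNReal.ofReal_mul hκ₂0,
        ← ENNReal.ofReal_add (mul_nonneg hκ₁0 (Real.rpow_nonneg dist_nonneg p))
          (mul_nonneg hκ₂0 (Real.rpow_nonneg (persDist_nonneg _) p))]
      apply ENNReal.ofReal_le_ofReal
      rw [zero_add] at hpt
      exact hpt
  refine le_trans hbound ?_
  have hm1 : Measurable fun z : Pt × Pt =>
      (Prod.snd ⁻¹' K).indicator (fun _ => ENNReal.ofReal ε') z :=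
    measurable_const.indicator (measurable_snd hKmeas)
  have hm2 : Measurable fun z : Pt × Pt =>
      ENNReal.ofReal κ₁ * ENNReal.ofReal (dist z.1 z.2 ^ p) :=
    (meas_distPow hp).const_mul _
  have hm3 : Measurable fun z : Pt × Pt =>
      ENNReal.ofReal κ₂ * (Kᶜ.indicator (fun y => ENNReal.ofReal (persDist y ^ p)) z.2) :=
    (((meas_persPow hp).indicator hKmeas.compl).comp measurable_snd).const_mul _
  rw [lintegral_add_left (by exact hm1.add hm2 : Measurable fun z : Pt × Pt =>
      (Prod.snd ⁻¹' K).indicator (fun _ => ENNReal.ofReal ε') z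
        + ENNReal.ofReal κ₁ * ENNReal.ofReal (dist z.1 z.2 ^ p)), lintegral_add_left hm1]
  apply add_le_add
  apply add_le_add
  · -- first piece
    rw [lintegral_indicator_const (measurable_snd hKmeas)]
    have : π (Prod.snd ⁻¹' K) = μ K := by
      rw [← Set.univ_prod]
      exact hπ.2.2 K hKmeas hKU
    rw [this]
  · -- second piece
    rw [lintegral_const_mul _ (meas_distPow hp)]
    exact le_refl _
  · -- third piece
    have hm3' : Measurable fun z : Pt × Pt =>
        Kᶜ.indicator (fun y => ENNReal.ofReal (persDist y ^ p)) z.2 :=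
      ((meas_persPow hp).indicator hKmeas.compl).comp measurable_snd
    rw [lintegral_const_mul _ hm3']
    apply mul_le_mul_right
    rw [show (fun z : Pt × Pt => Kᶜ.indicator (fun y => ENNReal.ofReal (persDist y ^ p)) z.2)
        = fun z : Pt × Pt => Kᶜ.indicator (fun y => ENNReal.ofReal (persDist y ^ p))
          (Prod.snd z) from rfl]
    rw [lint_marg hp measurable_snd (Adm_snd_null hπ) (Adm_snd_restrict hπ hμ.1) K hKmeas]

end PlanEstimate

section Tail
variable {p : ℝ}

lemma tail_ne_top (hp : 1 ≤ p) {μ : Measure Pt} (hμ : MemMp p μ) (S : Set Pt) :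
    ∫⁻ x in S, ENNReal.ofReal (persDist x ^ p) ∂μ ≠ ⊤ := by
  have h1 : ∫⁻ x in S, ENNReal.ofReal (persDist x ^ p) ∂μ
      ≤ ∫⁻ x, ENNReal.ofReal (persDist x ^ p) ∂μ := setLIntegral_le_lintegral _ _
  rw [pers_eq_total hp hμ.1] at h1
  exact ne_top_of_le_ne_top hμ.2.ne h1

lemma tail_tendsto (hp : 1 ≤ p) {μ : Measure Pt} (hμ : MemMp p μ) :
    Tendsto (fun m : ℕ => ∫⁻ x in (Kset (1/((m:ℝ)+1)) ((m:ℝ)+1))ᶜ,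
      ENNReal.ofReal (persDist x ^ p) ∂μ) atTop (𝓝 0) := by
  set ν := μ.withDensity (fun x => ENNReal.ofReal (persDist x ^ p)) with hν
  have happ : ∀ m : ℕ, ∫⁻ x in (Kset (1/((m:ℝ)+1)) ((m:ℝ)+1))ᶜ,
      ENNReal.ofReal (persDist x ^ p) ∂μ = ν ((Kset (1/((m:ℝ)+1)) ((m:ℝ)+1))ᶜ) := by
    intro m
    rw [hν, withDensity_apply _ (Kset_closed _ _).measurableSet.compl]
  have hmono : Antitone (fun m : ℕ => (Kset (1/((m:ℝ)+1)) ((m:ℝ)+1))ᶜ) := by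
    intro m m' hmm
    apply compl_subset_compl.2
    rintro x ⟨⟨hx1, hx2⟩, hx3⟩
    have hm1 : (1:ℝ)/((m':ℝ)+1) ≤ 1/((m:ℝ)+1) := by
      apply one_div_le_one_div_of_le (by positivity)
      have : (m:ℝ) ≤ (m':ℝ) := Nat.cast_le.2 hmm
      linarith
    refine ⟨⟨hx1, le_trans hm1 hx2⟩, ?_⟩
    have : (m:ℝ) + 1 ≤ (m':ℝ) + 1 := by
      have : (m:ℝ) ≤ (m':ℝ) := Nat.cast_le.2 hmm
      linarith
    exact closedBall_subset_closedBall this hx3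
  have hfin : ν univ ≠ ⊤ := by
    rw [hν, withDensity_apply _ MeasurableSet.univ, Measure.restrict_univ,
      pers_eq_total hp hμ.1]
    exact hμ.2.ne
  have hinter : ν (⋂ m : ℕ, (Kset (1/((m:ℝ)+1)) ((m:ℝ)+1))ᶜ) = 0 := by
    have hsub : (⋂ m : ℕ, (Kset (1/((m:ℝ)+1)) ((m:ℝ)+1))ᶜ) ⊆ UHPᶜ := by
      intro x hx
      simp only [mem_iInter, mem_compl_iff] at hx
      intro hxU
      obtain ⟨m₁, hm₁⟩ := exists_nat_ge ‖x‖
      obtain ⟨m₂, hm₂⟩ := exists_nat_one_div_lt (persDist_pos hxU)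
      apply hx (max m₁ m₂)
      have hle : (m₂:ℝ) ≤ ((max m₁ m₂ : ℕ):ℝ) := Nat.cast_le.2 (le_max_right _ _)
      have hle1 : (m₁:ℝ) ≤ ((max m₁ m₂ : ℕ):ℝ) := Nat.cast_le.2 (le_max_left _ _)
      refine ⟨⟨Or.inl hxU, ?_⟩, ?_⟩
      · show 1/(((max m₁ m₂ : ℕ):ℝ)+1) ≤ persDist x
        have : (1:ℝ)/(((max m₁ m₂ : ℕ):ℝ)+1) ≤ 1/((m₂:ℝ)+1) :=
          one_div_le_one_div_of_le (by positivity) (by linarith)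
        linarith
      · apply mem_closedBall_zero_iff.2
        linarith
    have hν0 : ν UHPᶜ = 0 := by
      rw [hν, withDensity_apply _ measurableSet_UHP.compl,
        setLIntegral_measure_zero _ _ hμ.1]
    exact measure_mono_null hsub hν0
  have := tendsto_measure_iInter_atTop
    (fun m => ((Kset_closed _ _).measurableSet.compl.nullMeasurableSet))
    hmono ⟨0, ne_top_of_le_ne_top hfin (measure_mono (subset_univ _))⟩
  rw [hinter] at this
  refine this.congr (fun m => ?_)
  exact (happ m).symm

end Tail

section Reverse
variable {p : ℝ} {B : Type*} [NormedAddCommGroup B] [NormedSpace ℝ B] [CompleteSpace B]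

lemma reverse_dir (hp : 1 ≤ p) {f : Pt → B} (hfc : ContinuousOn f UHP) {C₀ : ℝ}
    (hfb₀ : ∀ x ∈ UHP, ‖f x‖ ≤ C₀ * persDist x ^ p)
    (μ : Measure Pt) (μs : ℕ → Measure Pt) (hμ : MemMp p μ) (hμs : ∀ n, MemMp p (μs n))
    (hOT : Tendsto (fun n => OTe p (μs n) μ) atTop (𝓝 0)) :
    Tendsto (fun n => ∫ x, f x ∂(μs n)) atTop (𝓝 (∫ x, f x ∂μ)) := by
  set C := max C₀ 0 with hCdef
  have hC : 0 ≤ C := le_max_right _ _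
  have hfb : ∀ x ∈ UHP, ‖f x‖ ≤ C * persDist x ^ p := by
    intro x hx
    exact le_trans (hfb₀ x hx) (mul_le_mul_of_nonneg_right (le_max_left _ _)
      (Real.rpow_nonneg (persDist_nonneg x) p))
  have h2p : (0:ℝ) ≤ 2 ^ p := Real.rpow_nonneg (by norm_num) p
  set κ₂ := C * (2 ^ p + 1) with hκ₂def
  have hκ₂0 : 0 ≤ κ₂ := mul_nonneg hC (by linarith)
  rw [Metric.tendsto_atTop]
  intro ε hε
  -- choose tail cutoff
  have htail := tail_tendsto hp hμ
  have htpos : (0:ℝ≥0∞) < ENNReal.ofReal (ε/(4*(κ₂+1))) :=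
    ENNReal.ofReal_pos.2 (by positivity)
  obtain ⟨m, hm⟩ := (htail.eventually_lt_const htpos).exists
  set δ : ℝ := 1/((m:ℝ)+1) with hδdef
  set R : ℝ := (m:ℝ)+1 with hRdef
  have hδ : 0 < δ := by positivity
  have hR : 0 < R := by positivity
  set K := Kset δ R with hKdef
  have hKfin : μ K ≠ ⊤ := Kset_measure_finite hp hδ hμ
  set ε' := ε/(4*((μ K).toReal + 1)) with hε'def
  have hμKnn : 0 ≤ (μ K).toReal := ENNReal.toReal_nonneg
  have hε'pos : 0 < ε' := by positivity
  -- uniform continuity on thickened compact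
  have hK'cpt : IsCompact (cthickening (δ/2) K) := (Kset_compact δ R).cthickening
  have hfK' : ContinuousOn f (cthickening (δ/2) K) := hfc.mono (cthickening_subset_UHP hδ)
  obtain ⟨r₀, hr₀, hUC1⟩ :=
    Metric.uniformContinuousOn_iff.1 (hK'cpt.uniformContinuousOn_of_continuous hfK') ε' hε'pos
  set r := min r₀ (δ/2) with hrdef
  have hr : 0 < r := lt_min hr₀ (by positivity)
  have hrδ : r ≤ δ/2 := min_le_right _ _
  have hUC : ∀ a ∈ cthickening (δ/2) K, ∀ b ∈ cthickening (δ/2) K,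
      dist a b < r → ‖f a - f b‖ ≤ ε' := by
    intro a ha b hb hab
    have := hUC1 a ha b hb (lt_of_lt_of_le hab (min_le_left _ _))
    rw [dist_eq_norm] at this
    exact this.le
  set κ₁ := C * (2 ^ p + 2 * (R/r + 1) ^ p) with hκ₁def
  have hκ₁0 : 0 ≤ κ₁ := by
    have h2 : (0:ℝ) ≤ (R/r+1)^p := Real.rpow_nonneg (by positivity) p
    apply mul_nonneg hC; linarith
  set η := ENNReal.ofReal (ε/(4*(κ₁+1))) with hηdef
  have hηpos : (0:ℝ≥0∞) < η := ENNReal.ofReal_pos.2 (by positivity)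
  obtain ⟨N, hN⟩ := eventually_atTop.1 (hOT.eventually_lt_const hηpos)
  refine ⟨N, fun n hn => ?_⟩
  have hlt : OTe p (μs n) μ < η := hN n hn
  rw [OTe, iInf_lt_iff] at hlt
  obtain ⟨π, hπlt⟩ := hlt
  rw [iInf_lt_iff] at hπlt
  obtain ⟨hπmem, hπCost⟩ := hπlt
  have hCostne : Cost p π ≠ ⊤ := (hπCost.trans ENNReal.ofReal_lt_top).ne
  have hbound := plan_estimate hp hfc hC hfb (hμs n) hμ hπmem hCostne hδ hR hr hrδ
    hε'pos.le hUC
  rw [dist_eq_norm]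
  refine lt_of_le_of_lt hbound ?_
  have hT1 : ENNReal.ofReal ε' * μ K ≠ ⊤ :=
    ENNReal.mul_ne_top ENNReal.ofReal_ne_top hKfin
  have hT2 : ENNReal.ofReal κ₁ * Cost p π ≠ ⊤ :=
    ENNReal.mul_ne_top ENNReal.ofReal_ne_top hCostne
  have hT3 : ENNReal.ofReal κ₂ * ∫⁻ x in Kᶜ, ENNReal.ofReal (persDist x ^ p) ∂μ ≠ ⊤ :=
    ENNReal.mul_ne_top ENNReal.ofReal_ne_top (tail_ne_top hp hμ _)
  rw [ENNReal.toReal_add (ENNReal.add_ne_top.2 ⟨hT1, hT2⟩) hT3, ENNReal.toReal_add hT1 hT2]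
  have hb1 : (ENNReal.ofReal ε' * μ K).toReal ≤ ε/4 := by
    rw [ENNReal.toReal_mul, ENNReal.toReal_ofReal hε'pos.le]
    rw [hε'def]
    set x := (μ K).toReal
    have h4 : (0:ℝ) < 4*(x+1) := by positivity
    rw [div_mul_eq_mul_div, div_le_div_iff₀ h4 (by norm_num : (0:ℝ) < 4)]
    nlinarith
  have hb2 : (ENNReal.ofReal κ₁ * Cost p π).toReal ≤ ε/4 := by
    rw [ENNReal.toReal_mul, ENNReal.toReal_ofReal hκ₁0]
    have hc : (Cost p π).toReal < ε/(4*(κ₁+1)) := by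
      rw [← ENNReal.lt_ofReal_iff_toReal_lt hCostne]
      exact hπCost
    calc κ₁ * (Cost p π).toReal ≤ κ₁ * (ε/(4*(κ₁+1))) :=
          mul_le_mul_of_nonneg_left hc.le hκ₁0
      _ ≤ ε/4 := by
          have h4 : (0:ℝ) < 4*(κ₁+1) := by positivity
          rw [show κ₁ * (ε/(4*(κ₁+1))) = κ₁*ε/(4*(κ₁+1)) by ring,
            div_le_div_iff₀ h4 (by norm_num : (0:ℝ) < 4)]
          nlinarith
  have hb3 : (ENNReal.ofReal κ₂ * ∫⁻ x in Kᶜ, ENNReal.ofReal (persDist x ^ p) ∂μ).toReal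
      ≤ ε/4 := by
    rw [ENNReal.toReal_mul, ENNReal.toReal_ofReal hκ₂0]
    have hc : (∫⁻ x in Kᶜ, ENNReal.ofReal (persDist x ^ p) ∂μ).toReal < ε/(4*(κ₂+1)) := by
      rw [← ENNReal.lt_ofReal_iff_toReal_lt (tail_ne_top hp hμ _)]
      exact hm
    calc κ₂ * (∫⁻ x in Kᶜ, ENNReal.ofReal (persDist x ^ p) ∂μ).toReal
        ≤ κ₂ * (ε/(4*(κ₂+1))) := mul_le_mul_of_nonneg_left hc.le hκ₂0
      _ ≤ ε/4 := by
          have h4 : (0:ℝ) < 4*(κ₂+1) := by positivity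
          rw [show κ₂ * (ε/(4*(κ₂+1))) = κ₂*ε/(4*(κ₂+1)) by ring,
            div_le_div_iff₀ h4 (by norm_num : (0:ℝ) < 4)]
          nlinarith
  linarith

end Reverse

section PairPlans
variable {p : ℝ}

lemma Adm_pair (c : ℝ≥0∞) {a b : Pt} (ha : a ∈ UHPbar) (hb : b ∈ UHPbar)
    {μ ν : Measure Pt}
    (hμ : ∀ A : Set Pt, MeasurableSet A → A ⊆ UHP → μ A = c * (Measure.dirac a) A)
    (hν : ∀ B : Set Pt, MeasurableSet B → B ⊆ UHP → ν B = c * (Measure.dirac b) B) :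
    (c • Measure.dirac (a, b)) ∈ Adm μ ν := by
  have hab : (a, b) ∈ UHPbar ×ˢ UHPbar := ⟨ha, hb⟩
  refine ⟨?_, ?_, ?_⟩
  · rw [Measure.smul_apply, Measure.dirac_apply' _ (measurableSet_UHPbar.prod measurableSet_UHPbar).compl]
    rw [indicator_of_notMem (by simpa using hab)]
    simp
  · intro A hA hAU
    rw [Measure.smul_apply, Measure.dirac_apply' _ (hA.prod MeasurableSet.univ),
      hμ A hA hAU, Measure.dirac_apply' _ hA]
    by_cases haA : a ∈ A
    · rw [indicator_of_mem (by simp [haA] : (a,b) ∈ A ×ˢ univ), indicator_of_mem haA]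
      simp
    · rw [indicator_of_notMem (by simp [haA] : (a,b) ∉ A ×ˢ univ), indicator_of_notMem haA]
      simp
  · intro A hA hAU
    rw [Measure.smul_apply, Measure.dirac_apply' _ (MeasurableSet.univ.prod hA),
      hν A hA hAU, Measure.dirac_apply' _ hA]
    by_cases haA : b ∈ A
    · rw [indicator_of_mem (by simp [haA] : (a,b) ∈ univ ×ˢ A), indicator_of_mem haA]
      simp
    · rw [indicator_of_notMem (by simp [haA] : (a,b) ∉ univ ×ˢ A), indicator_of_notMem haA]
      simp

lemma Cost_pair (hp : 1 ≤ p) (c : ℝ≥0∞) (a b : Pt) :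
    Cost p (c • Measure.dirac (a, b)) = c * ENNReal.ofReal (dist a b ^ p) := by
  rw [Cost, lintegral_smul_measure, lintegral_dirac, smul_eq_mul]

lemma OTe_le_pair (hp : 1 ≤ p) (c : ℝ≥0∞) {a b : Pt} (ha : a ∈ UHPbar) (hb : b ∈ UHPbar)
    {μ ν : Measure Pt}
    (hμ : ∀ A : Set Pt, MeasurableSet A → A ⊆ UHP → μ A = c * (Measure.dirac a) A)
    (hν : ∀ B : Set Pt, MeasurableSet B → B ⊆ UHP → ν B = c * (Measure.dirac b) B) :
    OTe p μ ν ≤ c * ENNReal.ofReal (dist a b ^ p) := by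
  rw [← Cost_pair hp c a b]
  exact iInf₂_le _ (Adm_pair c ha hb hμ hν)

lemma dist_proj {a : Pt} (ha : a 0 ≤ a 1) :
    dist a (mk2 ((a 0 + a 1)/2) ((a 0 + a 1)/2)) = persDist a := by
  rw [persDist_eq ha, dist_pt_eq]
  have h2 : (0:ℝ) < Real.sqrt 2 := Real.sqrt_pos.2 (by norm_num)
  simp only [mk2_apply_zero, mk2_apply_one]
  rw [show ((a 0 - (a 0 + a 1)/2)^2 + (a 1 - (a 0 + a 1)/2)^2 : ℝ)
      = ((a 1 - a 0)/Real.sqrt 2)^2 by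
    field_simp
    nlinarith [Real.sq_sqrt (by norm_num : (2:ℝ) ≥ 0)]]
  rw [Real.sqrt_sq (div_nonneg (by linarith) h2.le)]

lemma proj_mem_Diag (a : Pt) : mk2 ((a 0 + a 1)/2) ((a 0 + a 1)/2) ∈ Diag := by
  simp [Diag]

lemma memMp_smul_dirac (hp : 1 ≤ p) {a : Pt} (ha : a ∈ UHP) (c : ℝ≥0∞) (hc : c ≠ ⊤) :
    MemMp p (c • Measure.dirac a) := by
  constructor
  · rw [Measure.smul_apply, Measure.dirac_apply' _ measurableSet_UHP.compl,
      indicator_of_notMem (by simpa using ha)]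
    simp
  · have h1 : Pers p (c • Measure.dirac a)
        ≤ ∫⁻ x, ENNReal.ofReal (persDist x ^ p) ∂(c • Measure.dirac a) :=
      setLIntegral_le_lintegral _ _
    rw [lintegral_smul_measure, lintegral_dirac] at h1
    exact lt_of_le_of_lt h1 (ENNReal.mul_lt_top hc.lt_top ENNReal.ofReal_lt_top)

lemma memMp_dirac (hp : 1 ≤ p) {a : Pt} (ha : a ∈ UHP) : MemMp p (Measure.dirac a) := by
  have := memMp_smul_dirac hp ha 1 (by simp)
  simpa using this

lemma memMp_zero : MemMp p (0 : Measure Pt) := by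
  constructor
  · simp
  · rw [Pers]
    simp

end PairPlans

section Forward
variable {p : ℝ} {B : Type*} [NormedAddCommGroup B] [NormedSpace ℝ B] [CompleteSpace B]

lemma forward_bound (hp : 1 ≤ p) {f : Pt → B}
    (H : ∀ (μ : Measure Pt) (μs : ℕ → Measure Pt), MemMp p μ → (∀ n, MemMp p (μs n)) →
        Tendsto (fun n => OTe p (μs n) μ) atTop (𝓝 0) →
        Tendsto (fun n => ∫ x, f x ∂(μs n)) atTop (𝓝 (∫ x, f x ∂μ))) :
    ∃ C : ℝ, ∀ x ∈ UHP, ‖f x‖ ≤ C * persDist x ^ p := by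
  by_contra hcon
  push_neg at hcon
  choose x hxU hxb using fun n : ℕ => hcon ((n:ℝ)+1)
  have hp0 : p ≠ 0 := by linarith
  set d : ℕ → ℝ := fun n => persDist (x n) with hddef
  set a : ℕ → ℝ := fun n => ‖f (x n)‖ with hadef
  have hd : ∀ n, 0 < d n := fun n => persDist_pos (hxU n)
  have hdp : ∀ n, 0 < d n ^ p := fun n => Real.rpow_pos_of_pos (hd n) p
  have ha : ∀ n, 0 < a n := fun n =>
    lt_trans (mul_pos (by positivity) (hdp n)) (hxb n)
  set c : ℕ → ℝ≥0∞ := fun n => ENNReal.ofReal (1/(a n)) with hcdef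
  set μs : ℕ → Measure Pt := fun n => c n • Measure.dirac (x n) with hμsdef
  have hμs : ∀ n, MemMp p (μs n) := fun n =>
    memMp_smul_dirac hp (hxU n) _ ENNReal.ofReal_ne_top
  have hOTle : ∀ n, OTe p (μs n) 0 ≤ ENNReal.ofReal (1/((n:ℝ)+1)) := by
    intro n
    set y : Pt := mk2 ((x n 0 + x n 1)/2) ((x n 0 + x n 1)/2) with hydef
    have hyD : y ∈ Diag := proj_mem_Diag (x n)
    have h1 : OTe p (μs n) 0 ≤ c n * ENNReal.ofReal (dist (x n) y ^ p) := by
      apply OTe_le_pair hp (c n) (Or.inl (hxU n)) (Or.inr hyD)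
      · intro A hA hAU
        rw [Measure.smul_apply, smul_eq_mul]
      · intro A hA hAU
        rw [Measure.dirac_apply' _ hA, indicator_of_notMem, mul_zero]
        · simp
        · intro hyA
          have : y ∈ UHP := hAU hyA
          exact absurd hyD.symm (ne_of_lt this)
    have h2 : dist (x n) y = d n := dist_proj (le_of_lt (hxU n))
    rw [h2] at h1
    refine le_trans h1 ?_
    rw [hcdef, ← ENNReal.ofReal_mul (by positivity)]
    apply ENNReal.ofReal_le_ofReal
    rw [div_mul_eq_mul_div, one_mul, div_le_div_iff₀ (ha n) (by positivity)]
    nlinarith [le_of_lt (hxb n), hdp n]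
  have hOT : Tendsto (fun n => OTe p (μs n) 0) atTop (𝓝 0) := by
    apply tendsto_of_tendsto_of_tendsto_of_le_of_le tendsto_const_nhds _
      (fun n => zero_le) hOTle
    have h0 : Tendsto (fun n : ℕ => (1:ℝ)/((n:ℝ)+1)) atTop (𝓝 0) :=
      tendsto_one_div_add_atTop_nhds_zero_nat
    have := ENNReal.tendsto_ofReal (f := atTop) h0
    simpa using this
  have hconv := H 0 μs memMp_zero hμs hOT
  have hval : ∀ n, ∫ z, f z ∂(μs n) = (c n).toReal • f (x n) := by
    intro n
    rw [hμsdef]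
    simp only [integral_smul_measure]
    rw [integral_dirac]
  have hnorm : ∀ n, ‖∫ z, f z ∂(μs n)‖ = 1 := by
    intro n
    rw [hval n, norm_smul]
    rw [hcdef]
    simp only [Real.norm_eq_abs, ENNReal.toReal_ofReal (by positivity : (0:ℝ) ≤ 1/(a n))]
    rw [abs_of_nonneg (by positivity : (0:ℝ) ≤ 1/(a n))]
    have han := (ha n).ne'
    rw [show ‖f (x n)‖ = a n from rfl]
    field_simp
  have h1 : Tendsto (fun _ : ℕ => (1:ℝ)) atTop (𝓝 0) := by
    have := hconv.norm
    simp only [integral_zero_measure, norm_zero] at this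
    refine this.congr (fun n => hnorm n)
  exact absurd (tendsto_nhds_unique h1 tendsto_const_nhds) (by norm_num)

lemma forward_cont (hp : 1 ≤ p) {f : Pt → B}
    (H : ∀ (μ : Measure Pt) (μs : ℕ → Measure Pt), MemMp p μ → (∀ n, MemMp p (μs n)) →
        Tendsto (fun n => OTe p (μs n) μ) atTop (𝓝 0) →
        Tendsto (fun n => ∫ x, f x ∂(μs n)) atTop (𝓝 (∫ x, f x ∂μ))) :
    ContinuousOn f UHP := by
  intro x₀ hx₀
  rw [ContinuousWithinAt]
  apply tendsto_iff_seq_tendsto.2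
  intro u hu
  have hu1 : Tendsto u atTop (𝓝 x₀) := hu.mono_right nhdsWithin_le_nhds
  have hu2 : ∀ᶠ n in atTop, u n ∈ UHP := hu self_mem_nhdsWithin
  set v : ℕ → Pt := fun n => if u n ∈ UHP then u n else x₀ with hvdef
  have hv : ∀ n, v n ∈ UHP := by
    intro n
    rw [hvdef]
    by_cases h : u n ∈ UHP
    · simpa [h] using h
    · simpa [h] using hx₀
  have hveq : ∀ᶠ n in atTop, u n = v n := by
    filter_upwards [hu2] with n h
    simp [hvdef, h]
  have hv1 : Tendsto v atTop (𝓝 x₀) := hu1.congr' hveq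
  have hOT : Tendsto (fun n => OTe p (Measure.dirac (v n)) (Measure.dirac x₀)) atTop (𝓝 0) := by
    have hle : ∀ n, OTe p (Measure.dirac (v n)) (Measure.dirac x₀)
        ≤ ENNReal.ofReal (dist (v n) x₀ ^ p) := by
      intro n
      have h1 := OTe_le_pair hp 1 (μ := Measure.dirac (v n)) (ν := Measure.dirac x₀)
        (Or.inl (hv n)) (Or.inl hx₀)
        (fun A hA hAU => (one_mul _).symm) (fun A hA hAU => (one_mul _).symm)
      simpa using h1
    apply tendsto_of_tendsto_of_tendsto_of_le_of_le tendsto_const_nhds _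
      (fun n => zero_le) hle
    have hdist : Tendsto (fun n => dist (v n) x₀) atTop (𝓝 0) :=
      tendsto_iff_dist_tendsto_zero.1 hv1
    have hca : ContinuousAt (fun t : ℝ => t ^ p) 0 :=
      Real.continuousAt_rpow_const 0 p (Or.inr (by linarith))
    have hpow := (hca.tendsto).comp hdist
    rw [Real.zero_rpow (by linarith : p ≠ 0)] at hpow
    have := ENNReal.tendsto_ofReal (f := atTop) hpow
    simpa using this
  have hconv := H (Measure.dirac x₀) (fun n => Measure.dirac (v n))
    (memMp_dirac hp hx₀) (fun n => memMp_dirac hp (hv n)) hOT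
  simp only [integral_dirac] at hconv
  apply hconv.congr'
  filter_upwards [hveq] with n h
  simp [Function.comp, h]

end Forward

end Helpers

/-- the linear representation Φ(μ) = ∫ f dμ, with values in a
Banach space, is OT_p-continuous iff f is continuous on Ω and f/d(·,∂Ω)^p is
bounded on Ω. -/
theorem stmt18 (p : ℝ) (hp : 1 ≤ p) {B : Type*} [NormedAddCommGroup B]
    [NormedSpace ℝ B] [CompleteSpace B] (f : Pt → B) :
    ((∀ (μ : Measure Pt) (μs : ℕ → Measure Pt), MemMp p μ → (∀ n, MemMp p (μs n)) →
        Tendsto (fun n => OTe p (μs n) μ) atTop (𝓝 0) →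
        Tendsto (fun n => ∫ x, f x ∂(μs n)) atTop (𝓝 (∫ x, f x ∂μ))) ↔
      (ContinuousOn f UHP ∧ ∃ C : ℝ, ∀ x ∈ UHP, ‖f x‖ ≤ C * persDist x ^ p)) := by
  constructor
  · intro H
    exact ⟨forward_cont hp H, forward_bound hp H⟩
  · rintro ⟨hfc, C, hfb⟩ μ μs hμ hμs hOT
    exact reverse_dir hp hfc hfb μ μs hμ hμs hOT
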